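/- arXiv:1504.01557 — 5 statements merged into one kernel-verified Lean document; each statement's English description precedes it below -/
import Mathlib

section
/- For upper-semicontinuous cost functions, the two transfinite hierarchies coincide at their fixpoints: P'_{β*}(hv) = P_{α*}(hv) for every history hv, where P_α is the hierarchy for weak SPE outcomes and P'_α the hierarchy for SPE outcomes (which removes a play ρ whenever some player can beat it against every play of a set D_α^{H,i}(h'v') of plays with maximal (H,i)-decompositions, for some set H of deviation histories). -/
open Classical

noncomputable section

/-- A multiplayer turn-based quantitative game on a directed graph:
`owner` assigns each vertex to a player, `E` is the edge relation (every
vertex has a successor), and `cost i` is player `i`'s cost function on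
infinite sequences of vertices (to be minimized), valued in `ℝ ∪ {±∞}`. -/
structure QGame (P V : Type) where
  owner : V → P
  E : V → V → Prop
  succ_exists : ∀ v, ∃ v', E v v'
  cost : P → (ℕ → V) → EReal

namespace QGame

variable {P V : Type}

/-- An infinite play of the game: consecutive vertices are joined by edges. -/
def IsPlay (G : QGame P V) (ρ : ℕ → V) : Prop := ∀ n, G.E (ρ n) (ρ (n + 1))

/-- Concatenation `hρ` of a finite history `h` with an infinite play `ρ`. -/
def prepend (h : List V) (ρ : ℕ → V) : ℕ → V := fun n =>
  if hn : n < h.length then h.get ⟨n, hn⟩ else ρ (n - h.length)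

/-- The prefix of length `n` of a play, as a list. -/
def playPrefix (ρ : ℕ → V) (n : ℕ) : List V := List.ofFn fun k : Fin n => ρ k

/-- `hv` is a history of the game initialized at `v0`: here `h` is the strict
past and `v` the current vertex; the sequence `h ++ [v]` starts at `v0` and
follows edges. -/
def IsHist (G : QGame P V) (v0 : V) (h : List V) (v : V) : Prop :=
  (h ++ [v]).head? = some v0 ∧ List.Chain' G.E (h ++ [v])

/-- A (turn-based) strategy profile: given the past history and the current
vertex, choose the next vertex.  An individual strategy of player `i` is of
the same type; only its values at vertices owned by `i` matter. -/
abbrev Strat (P V : Type) := List V → V → V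

/-- A profile/strategy is valid if it always follows edges. -/
def Valid (G : QGame P V) (σ : Strat P V) : Prop := ∀ h v, G.E v (σ h v)

/-- History/current-vertex pair produced after `n` steps of `σ` from `v`. -/
def outcomeAux (σ : Strat P V) (v : V) : ℕ → List V × V
  | 0 => ([], v)
  | n + 1 =>
      let p := outcomeAux σ v n
      (p.1 ++ [p.2], σ p.1 p.2)

/-- The outcome play of profile `σ` from initial vertex `v`. -/
def outcome (σ : Strat P V) (v : V) (n : ℕ) : V := (outcomeAux σ v n).2

/-- The profile where player `i` unilaterally deviates to strategy `τ`
from the profile `σ`. -/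
def devProf (G : QGame P V) (σ τ : Strat P V) (i : P) : Strat P V :=
  fun h v => if G.owner v = i then τ h v else σ h v

/-- The set of deviation steps of `τ` from `σ` (for player `i`, from `v`):
positions `n` along the outcome of the deviated profile where the current
vertex belongs to player `i` and `τ` disagrees with `σ`. -/
def devSteps (G : QGame P V) (σ τ : Strat P V) (i : P) (v : V) : Set ℕ :=
  {n | G.owner (outcome (G.devProf σ τ i) v n) = i ∧
       σ (outcomeAux (G.devProf σ τ i) v n).1 (outcome (G.devProf σ τ i) v n) ≠
       τ (outcomeAux (G.devProf σ τ i) v n).1 (outcome (G.devProf σ τ i) v n)}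

/-- `τ` is finitely deviating from `σ`. -/
def FinDev (G : QGame P V) (σ τ : Strat P V) (i : P) (v : V) : Prop :=
  (G.devSteps σ τ i v).Finite

/-- `τ` is one-shot deviating from `σ`: its unique deviation step is at the
initial vertex. -/
def OneShotDev (G : QGame P V) (σ τ : Strat P V) (i : P) (v : V) : Prop :=
  G.devSteps σ τ i v = {0}

/-- Nash equilibrium of the profile `σ` from `v`, with respect to a cost
assignment `c` (no player has a profitable unilateral deviation). -/
def IsNEwith (G : QGame P V) (c : P → (ℕ → V) → EReal) (σ : Strat P V) (v : V) : Prop :=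
  ∀ i τ, G.Valid τ →
    c i (outcome σ v) ≤ c i (outcome (G.devProf σ τ i) v)

/-- Weak Nash equilibrium: no profitable finitely deviating strategy. -/
def IsWeakNEwith (G : QGame P V) (c : P → (ℕ → V) → EReal) (σ : Strat P V) (v : V) : Prop :=
  ∀ i τ, G.Valid τ → G.FinDev σ τ i v →
    c i (outcome σ v) ≤ c i (outcome (G.devProf σ τ i) v)

/-- Very weak Nash equilibrium: no profitable one-shot deviating strategy. -/
def IsVeryWeakNEwith (G : QGame P V) (c : P → (ℕ → V) → EReal) (σ : Strat P V) (v : V) : Prop :=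
  ∀ i τ, G.Valid τ → G.OneShotDev σ τ i v →
    c i (outcome σ v) ≤ c i (outcome (G.devProf σ τ i) v)

/-- The strategy profile induced by `σ` in the subgame after history `h`. -/
def subStrat (σ : Strat P V) (h : List V) : Strat P V := fun g v => σ (h ++ g) v

/-- The cost functions of the subgame after history `h`. -/
def subCost (G : QGame P V) (h : List V) : P → (ℕ → V) → EReal :=
  fun i ρ => G.cost i (prepend h ρ)

/-- Subgame perfect equilibrium: Nash equilibrium in every subgame. -/
def IsSPE (G : QGame P V) (v0 : V) (σ : Strat P V) : Prop :=
  ∀ h v, G.IsHist v0 h v → G.IsNEwith (G.subCost h) (subStrat σ h) v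

/-- Weak subgame perfect equilibrium: weak NE in every subgame. -/
def IsWeakSPE (G : QGame P V) (v0 : V) (σ : Strat P V) : Prop :=
  ∀ h v, G.IsHist v0 h v → G.IsWeakNEwith (G.subCost h) (subStrat σ h) v

/-- Very weak subgame perfect equilibrium: very weak NE in every subgame. -/
def IsVeryWeakSPE (G : QGame P V) (v0 : V) (σ : Strat P V) : Prop :=
  ∀ h v, G.IsHist v0 h v → G.IsVeryWeakNEwith (G.subCost h) (subStrat σ h) v

/-- One elimination step: `ρ` (a potential outcome in the subgame after `h`)
is erased if some player `i` controlling a vertex `ρ n` along `hρ` has an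
alternative edge to some `v' ≠ ρ (n+1)` such that every play `ρ'` in the
current potential set after the extended history gives `i` a strictly
smaller cost than `hρ`. -/
def Eset (G : QGame P V) (Pr : List V → V → Set (ℕ → V)) (h : List V) :
    Set (ℕ → V) :=
  {ρ | ∃ n v', G.E (ρ n) v' ∧ v' ≠ ρ (n + 1) ∧
      ∀ ρ' ∈ Pr (h ++ playPrefix ρ (n + 1)) v',
        G.cost (G.owner (ρ n)) (prepend (h ++ playPrefix ρ (n + 1)) ρ') <
          G.cost (G.owner (ρ n)) (prepend h ρ)}

/-- The transfinite sequence `P_α(hv)` of sets of potential outcomes of weak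
Nash equilibria in the subgame `(G|_h, v)`: all plays at stage `0`, removal
of `E_α` at successors, intersections at limits. -/
def Pset (G : QGame P V) (α : Ordinal) : List V → V → Set (ℕ → V) :=
  Ordinal.limitRecOn (motive := fun _ => List V → V → Set (ℕ → V)) α
    (fun _h v => {ρ | G.IsPlay ρ ∧ ρ 0 = v})
    (fun _ Pr => fun h v => Pr h v \ G.Eset Pr h)
    (fun α _ Pr => fun h v => ⋂ (β : Ordinal) (hβ : β < α), Pr β hβ h v)

/-- A sequence of plays converges to `ρ` (in the product topology on `V^ω`
with `V` discrete) iff every finite prefix of `ρ` is eventually a prefix of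
the members of the sequence. -/
def Converges (ρs : ℕ → ℕ → V) (ρ : ℕ → V) : Prop :=
  ∀ m, ∃ N, ∀ n ≥ N, ∀ k ≤ m, ρs n k = ρ k

/-- Upper semicontinuity of a cost function on plays. -/
def USCcost (G : QGame P V) (c : (ℕ → V) → EReal) : Prop :=
  ∀ (ρs : ℕ → ℕ → V) (ρ : ℕ → V), (∀ n, G.IsPlay (ρs n)) → G.IsPlay ρ →
    Converges ρs ρ →
      Filter.limsup (fun n => c (ρs n)) Filter.atTop ≤ c ρ

/-- A strategy (profile) is finite-memory if it is computed by a Moore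
machine: a finite set `M` of memory states, updated while reading the
history, determines the move. -/
def FinMem (σ : Strat P V) : Prop :=
  ∃ (M : Type) (_ : Finite M) (m0 : M) (upd : M → V → M) (act : M → V → V),
    ∀ h v, σ h v = act (h.foldl upd m0) v

/-- Quantitative reachability cost: the least index at which `ρ` visits the
target set `T`, and `+∞` if `T` is never visited. -/
def reachCost (T : Set V) (ρ : ℕ → V) : EReal :=
  if h : ∃ n, ρ n ∈ T then ((Nat.find h : ℕ) : EReal) else ⊤

/-- `G` is a quantitative reachability game with target sets `T i`. -/
def IsReachGame (G : QGame P V) (T : P → Set V) : Prop :=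
  ∀ i ρ, G.cost i ρ = reachCost (T i) ρ

/-- The set of players that have not visited their target set along the
history `h`. -/
def Iset (T : P → Set V) (h : List V) : Set P := {i | ∀ u ∈ h, u ∉ T i}

end QGame

namespace QGame

variable {P V : Type}

/-- `ρ'` (whose prepended word is `w`) has a deviation step at position `q`
from a play of `Pr` starting at position `p`: some `ρ₁` in the current
potential set at position `p` agrees with `w` strictly before `q` and
differs from `w` exactly at `q`. -/
def DevStepAt (Pr : List V → V → Set (ℕ → V)) (w : ℕ → V) (p q : ℕ) : Prop :=
  p < q ∧ ∃ ρ₁ ∈ Pr (playPrefix w p) (w p),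
    (∀ k, p + k < q → ρ₁ k = w (p + k)) ∧ ρ₁ (q - p) ≠ w q

/-- An infinite `(H, i)`-decomposition of the play `ρ'` of the subgame after
`h'`, recorded by the strictly increasing sequence `p` of cut positions in
the word `w = h'ρ'` (with `p 0` the position of the first vertex of `ρ'`):
every block ends in a vertex of player `i`, and every later cut is a
deviation step, at a history belonging to `H`, from some play of the current
potential set at the previous cut. -/
def InfDecomp (G : QGame P V) (Pr : List V → V → Set (ℕ → V)) (i : P)
    (H : Set (List V × V)) (h' : List V) (ρ' : ℕ → V) (p : ℕ → ℕ) : Prop :=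
  p 0 = h'.length ∧ StrictMono p ∧
  (∀ n, G.owner (prepend h' ρ' (p (n + 1) - 1)) = i) ∧
  (∀ n, (playPrefix (prepend h' ρ') (p (n + 1)), prepend h' ρ' (p (n + 1))) ∈ H) ∧
  (∀ n, DevStepAt Pr (prepend h' ρ') (p n) (p (n + 1)))

/-- A finite `(H, i)`-decomposition of `ρ'` with `m` deviation steps, given
by cut positions `p 0 < ⋯ < p m`; the final tail of `ρ'` from position `p m`
belongs to the current potential set there. -/
def FinDecomp (G : QGame P V) (Pr : List V → V → Set (ℕ → V)) (i : P)
    (H : Set (List V × V)) (h' : List V) (ρ' : ℕ → V) (m : ℕ) (p : ℕ → ℕ) : Prop :=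
  p 0 = h'.length ∧ (∀ n < m, p n < p (n + 1)) ∧
  (∀ n < m, G.owner (prepend h' ρ' (p (n + 1) - 1)) = i) ∧
  (∀ n < m, (playPrefix (prepend h' ρ') (p (n + 1)), prepend h' ρ' (p (n + 1))) ∈ H) ∧
  (∀ n < m, DevStepAt Pr (prepend h' ρ') (p n) (p (n + 1))) ∧
  (fun k => prepend h' ρ' (p m + k)) ∈
    Pr (playPrefix (prepend h' ρ') (p m)) (prepend h' ρ' (p m))

/-- The set `D_α^{H,i}(h'v')` of plays admitting a *maximal*
`(H, i)`-decomposition: either an infinite decomposition, or a finite one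
with `m` deviation steps that cannot be strictly prolonged, i.e. there is no
play `ρ''` with an `(H, i)`-decomposition whose first `m` cuts agree with
those of `ρ'` and which branches off from `ρ'` exactly at its `(m+1)`-st cut. -/
def Dset (G : QGame P V) (Pr : List V → V → Set (ℕ → V)) (H : Set (List V × V))
    (i : P) (h' : List V) (v' : V) : Set (ℕ → V) :=
  {ρ' | ρ' 0 = v' ∧ G.IsPlay ρ' ∧
    ((∃ p, G.InfDecomp Pr i H h' ρ' p) ∨
      (∃ m p, G.FinDecomp Pr i H h' ρ' m p ∧
        ¬ ∃ (ρ'' : ℕ → V) (q : ℕ → ℕ), ρ'' 0 = v' ∧ G.IsPlay ρ'' ∧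
          (G.InfDecomp Pr i H h' ρ'' q ∨
            ∃ m', m < m' ∧ G.FinDecomp Pr i H h' ρ'' m' q) ∧
          (∀ n ≤ m, q n = p n) ∧
          (∀ k < q (m + 1), prepend h' ρ'' k = prepend h' ρ' k) ∧
          prepend h' ρ'' (q (m + 1)) ≠ prepend h' ρ' (q (m + 1))))}

/-- The set `𝐇(h'v')` of histories strictly extending the history `h'v'`
(pairs of a strict past and a current vertex). -/
def Hset (h' : List V) (v' : V) : Set (List V × V) :=
  {gu | (h' ++ [v']) <+: (gu.1 ++ [gu.2]) ∧
        (h' ++ [v']).length < (gu.1 ++ [gu.2]).length}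

/-- One elimination step of the hierarchy for SPEs: `ρ` is erased if some
player `i` controlling a vertex `ρ n` along `hρ` has an alternative edge to
`v' ≠ ρ (n+1)` and a set `H` of deviation histories such that `i` pays
strictly less than `λ_i(hρ)` against *every* play of `D^{H,i}(h'v')`. -/
def E'set (G : QGame P V) (Pr : List V → V → Set (ℕ → V)) (h : List V) :
    Set (ℕ → V) :=
  {ρ | ∃ n, ∃ v', ∃ H : Set (List V × V), G.E (ρ n) v' ∧ v' ≠ ρ (n + 1) ∧
      H ⊆ Hset (h ++ playPrefix ρ (n + 1)) v' ∧
      ∀ ρ' ∈ G.Dset Pr H (G.owner (ρ n)) (h ++ playPrefix ρ (n + 1)) v',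
        G.cost (G.owner (ρ n)) (prepend (h ++ playPrefix ρ (n + 1)) ρ') <
          G.cost (G.owner (ρ n)) (prepend h ρ)}

/-- The transfinite hierarchy `P'_α(hv)` of sets of potential outcomes of
SPEs. -/
def P'set (G : QGame P V) (α : Ordinal) : List V → V → Set (ℕ → V) :=
  Ordinal.limitRecOn (motive := fun _ => List V → V → Set (ℕ → V)) α
    (fun _h v => {ρ | G.IsPlay ρ ∧ ρ 0 = v})
    (fun _ Pr => fun h v => Pr h v \ G.E'set Pr h)
    (fun α _ Pr => fun h v => ⋂ (β : Ordinal) (hβ : β < α), Pr β hβ h v)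

end QGame



namespace QGameAux

open QGame

variable {P V : Type}

@[simp] lemma playPrefix_length (ρ : ℕ → V) (n : ℕ) : (playPrefix ρ n).length = n := by
  simp [playPrefix]

lemma playPrefix_getElem (ρ : ℕ → V) (n k : ℕ) (hk : k < n) :
    (playPrefix ρ n)[k]'(by simpa using hk) = ρ k := by
  simp [playPrefix]

lemma prepend_of_lt (h : List V) (ρ : ℕ → V) (n : ℕ) (hn : n < h.length) :
    prepend h ρ n = h[n] := by
  simp [prepend, hn]

lemma prepend_of_le (h : List V) (ρ : ℕ → V) (n : ℕ) (hn : h.length ≤ n) :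
    prepend h ρ n = ρ (n - h.length) := by
  simp [prepend, Nat.not_lt.mpr hn]

lemma prepend_add (h : List V) (ρ : ℕ → V) (k : ℕ) :
    prepend h ρ (h.length + k) = ρ k := by
  rw [prepend_of_le _ _ _ (Nat.le_add_right _ _)]
  congr 1; omega

lemma playPrefix_congr {w w' : ℕ → V} {n : ℕ} (h : ∀ k < n, w k = w' k) :
    playPrefix w n = playPrefix w' n := by
  apply List.ext_getElem (by simp)
  intro k hk _; simpa [playPrefix] using h k (by simpa using hk)

lemma playPrefix_prepend (h : List V) (ρ : ℕ → V) :
    playPrefix (prepend h ρ) h.length = h := by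
  apply List.ext_getElem (by simp)
  intro k hk _
  rw [playPrefix_getElem _ _ _ (by simpa using hk), prepend_of_lt h ρ k (by simpa using hk)]

lemma prepend_playPrefix_shift (w : ℕ → V) (p : ℕ) :
    prepend (playPrefix w p) (fun m => w (p + m)) = w := by
  funext n
  rcases lt_or_ge n p with hn | hn
  · rw [prepend_of_lt _ _ _ (by simpa using hn), playPrefix_getElem _ _ _ hn]
  · rw [prepend_of_le _ _ _ (by simpa using hn)]
    simp only [playPrefix_length]
    congr 1; omega

lemma shift_prepend (h : List V) (ρ : ℕ → V) :
    (fun m => prepend h ρ (h.length + m)) = ρ := by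
  funext m; exact prepend_add h ρ m

lemma playPrefix_succ (w : ℕ → V) (p : ℕ) :
    playPrefix w (p + 1) = playPrefix w p ++ [w p] := by
  apply List.ext_getElem (by simp)
  intro k hk _
  rw [playPrefix_getElem _ _ _ (by simpa using hk)]
  rcases lt_or_ge k p with h | h
  · rw [List.getElem_append_left (by simp only [playPrefix_length]; exact h),
      playPrefix_getElem _ _ _ h]
  · have hk' : k = p := by simp only [playPrefix_length] at hk; omega
    subst hk'
    rw [List.getElem_append_right (by simp only [playPrefix_length]; exact h)]
    simp

lemma playPrefix_append (w : ℕ → V) (p m : ℕ) :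
    playPrefix w p ++ playPrefix (fun k => w (p + k)) m = playPrefix w (p + m) := by
  induction m with
  | zero => simp [playPrefix]
  | succ m ih =>
      rw [playPrefix_succ, ← Nat.add_assoc, playPrefix_succ, ← ih, List.append_assoc]


variable (G : QGame P V)

lemma isPlay_shift {w : ℕ → V} (hw : G.IsPlay w) (p : ℕ) :
    G.IsPlay (fun m => w (p + m)) := fun n => by
  have := hw (p + n); simpa [Nat.add_assoc] using this

lemma chain'_playPrefix {w : ℕ → V} (hw : G.IsPlay w) (p : ℕ) :
    List.Chain' G.E (playPrefix w p) := by
  rw [List.Chain', List.isChain_iff_getElem]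
  intro i hi
  simp only [playPrefix_length] at hi
  have e1 : (playPrefix w p).get ⟨i, by simp; omega⟩ = w i :=
    playPrefix_getElem w p i (by omega)
  have e2 : (playPrefix w p).get ⟨i + 1, by simp; omega⟩ = w (i + 1) :=
    playPrefix_getElem w p (i + 1) (by omega)
  simp only [List.get_eq_getElem] at e1 e2
  rw [e1, e2]
  exact hw i

lemma isHist_playPrefix {w : ℕ → V} {v0 : V} (hw : G.IsPlay w) (h0 : w 0 = v0) (p : ℕ) :
    G.IsHist v0 (playPrefix w p) (w p) := by
  constructor
  · rw [← playPrefix_succ]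
    simp [playPrefix, List.ofFn_succ, h0]
  · rw [← playPrefix_succ]
    exact chain'_playPrefix G hw (p + 1)

lemma isPlay_prepend {h : List V} {v v0 : V} {ρ : ℕ → V} (hist : G.IsHist v0 h v)
    (hρ : G.IsPlay ρ) (h0 : ρ 0 = v) : G.IsPlay (prepend h ρ) := by
  obtain ⟨-, hchain⟩ := hist
  rw [List.Chain', List.isChain_iff_getElem] at hchain
  intro n
  rcases lt_or_ge (n + 1) h.length with hn | hn
  · rw [prepend_of_lt _ _ _ (by omega), prepend_of_lt _ _ _ hn]
    have := hchain n (by simp; omega)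
    simpa [List.getElem_append, hn, Nat.lt_of_succ_lt hn] using this
  · rcases lt_or_ge n h.length with hn' | hn'
    · have hlen : n + 1 = h.length := by omega
      rw [prepend_of_lt _ _ _ hn', prepend_of_le _ _ _ hn, hlen, Nat.sub_self, h0]
      have := hchain n (by simp; omega)
      rw [List.getElem_append_left hn' (h' := by simp; omega)] at this
      rwa [show (h ++ [v])[n+1]'(by simp; omega) = v by
        rw [List.getElem_append_right (by omega)]; simp [hlen]] at this
    · rw [prepend_of_le _ _ _ hn', prepend_of_le _ _ _ hn]
      have : n + 1 - h.length = (n - h.length) + 1 := by omega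
      rw [this]
      exact hρ _

lemma prepend_zero {h : List V} {v v0 : V} {ρ : ℕ → V} (hist : G.IsHist v0 h v)
    (h0 : ρ 0 = v) : prepend h ρ 0 = v0 := by
  obtain ⟨hhead, -⟩ := hist
  rcases h with - | ⟨a, t⟩
  · simp at hhead
    simp [prepend, h0, hhead]
  · simp at hhead
    rw [prepend_of_lt _ _ _ (by simp)]
    simp [hhead]

lemma Pset_zero : G.Pset 0 = fun _h v => {ρ | G.IsPlay ρ ∧ ρ 0 = v} :=
  Ordinal.limitRecOn_zero _ _ _

lemma Pset_succ (α : Ordinal) :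
    G.Pset (α + 1) = fun h v => G.Pset α h v \ G.Eset (G.Pset α) h := by
  rw [Pset, Ordinal.add_one_eq_succ, Ordinal.limitRecOn_succ]; rfl

lemma Pset_limit {α : Ordinal} (hl : Order.IsSuccLimit α) :
    G.Pset α = fun h v => ⋂ (β : Ordinal) (_ : β < α), G.Pset β h v := by
  rw [Pset, Ordinal.limitRecOn_limit _ _ _ _ hl]; rfl

lemma P'set_zero : G.P'set 0 = fun _h v => {ρ | G.IsPlay ρ ∧ ρ 0 = v} :=
  Ordinal.limitRecOn_zero _ _ _

lemma P'set_succ (α : Ordinal) :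
    G.P'set (α + 1) = fun h v => G.P'set α h v \ G.E'set (G.P'set α) h := by
  rw [P'set, Ordinal.add_one_eq_succ, Ordinal.limitRecOn_succ]; rfl

lemma P'set_limit {α : Ordinal} (hl : Order.IsSuccLimit α) :
    G.P'set α = fun h v => ⋂ (β : Ordinal) (_ : β < α), G.P'set β h v := by
  rw [P'set, Ordinal.limitRecOn_limit _ _ _ _ hl]; rfl

lemma Pset_subset_zero (α : Ordinal) (h : List V) (v : V) :
    G.Pset α h v ⊆ {ρ | G.IsPlay ρ ∧ ρ 0 = v} := by
  induction α using Ordinal.induction with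
  | _ α IH =>
    rcases Ordinal.zero_or_succ_or_isSuccLimit α with h0 | ⟨β, hβ⟩ | hl
    · subst h0; rw [Pset_zero]
    · subst hβ
      rw [← Ordinal.add_one_eq_succ, Pset_succ]
      exact (Set.diff_subset).trans (IH β (by rw [← Ordinal.add_one_eq_succ]; exact Order.lt_succ β))
    · rw [Pset_limit G hl]
      intro ρ hρ
      exact IH 0 hl.pos (Set.mem_iInter₂.mp hρ 0 hl.pos)

lemma P'set_subset_zero (α : Ordinal) (h : List V) (v : V) :
    G.P'set α h v ⊆ {ρ | G.IsPlay ρ ∧ ρ 0 = v} := by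
  induction α using Ordinal.induction with
  | _ α IH =>
    rcases Ordinal.zero_or_succ_or_isSuccLimit α with h0 | ⟨β, hβ⟩ | hl
    · subst h0; rw [P'set_zero]
    · subst hβ
      rw [← Ordinal.add_one_eq_succ, P'set_succ]
      exact (Set.diff_subset).trans (IH β (by rw [← Ordinal.add_one_eq_succ]; exact Order.lt_succ β))
    · rw [P'set_limit G hl]
      intro ρ hρ
      exact IH 0 hl.pos (Set.mem_iInter₂.mp hρ 0 hl.pos)

lemma devStepAt_congr {Pr : List V → V → Set (ℕ → V)} {w w' : ℕ → V} {p q : ℕ}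
    (hw : ∀ m ≤ q, w m = w' m) (h : DevStepAt Pr w p q) : DevStepAt Pr w' p q := by
  obtain ⟨hpq, ρ₁, hρ₁, hag, hne⟩ := h
  refine ⟨hpq, ρ₁, ?_, fun k hk => ?_, ?_⟩
  · rwa [playPrefix_congr (fun k hk => (hw k (by omega)).symm), ← hw p (by omega)]
  · rw [← hw _ (by omega)]; exact hag k hk
  · rwa [← hw q le_rfl]

lemma mem_Dset_empty {Pr : List V → V → Set (ℕ → V)} {i : P} {h' : List V} {v' : V}
    {ρ' : ℕ → V} (hρ' : ρ' ∈ G.Dset Pr ∅ i h' v') : ρ' ∈ Pr h' v' := by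
  obtain ⟨h0, hplay, hdec | ⟨m, p, ⟨hp0, hmono, hown, hH, hdev, htail⟩, -⟩⟩ := hρ'
  · obtain ⟨p, -, -, -, hH, -⟩ := hdec
    exact absurd (hH 0) (Set.notMem_empty _)
  · rcases Nat.eq_zero_or_pos m with hm | hm
    · subst hm
      rw [hp0] at htail
      rw [playPrefix_prepend] at htail
      have h1 : (fun k => prepend h' ρ' (h'.length + k)) = ρ' := shift_prepend h' ρ'
      have h2 : prepend h' ρ' h'.length = v' := by
        have := prepend_add h' ρ' 0
        rwa [Nat.add_zero, h0] at this
      rwa [h1, h2] at htail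
    · exact absurd (hH 0 hm) (Set.notMem_empty _)

lemma le_limsup_of_forall {f : ℕ → EReal} {c : EReal} (h : ∀ n, c ≤ f n) :
    c ≤ Filter.limsup f Filter.atTop :=
  Filter.le_limsup_of_frequently_le (Filter.Frequently.of_forall h)


lemma isHist_playPrefix_alt {w : ℕ → V} {v0 : V} (hw : G.IsPlay w) (h0 : w 0 = v0)
    {q : ℕ} (hq : 0 < q) {v' : V} (he : G.E (w (q - 1)) v') :
    G.IsHist v0 (playPrefix w q) v' := by
  obtain ⟨r, rfl⟩ : ∃ r, q = r + 1 := ⟨q - 1, by omega⟩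
  constructor
  · simp [playPrefix, List.ofFn_succ, h0]
  · rw [List.Chain', List.isChain_append]
    refine ⟨chain'_playPrefix G hw _, List.isChain_singleton _, ?_⟩
    intro x hx y hy
    simp only [List.head?_cons, Option.mem_def, Option.some.injEq] at hy
    rw [playPrefix_succ, List.getLast?_concat, Option.mem_def, Option.some.injEq] at hx
    subst hx; subst hy
    simpa using he

lemma prepend_eq_playPrefix_append {h : List V} {ρ : ℕ → V} (n : ℕ) :
    h ++ playPrefix ρ n = playPrefix (prepend h ρ) (h.length + n) := by
  rw [← playPrefix_append (prepend h ρ) h.length n, playPrefix_prepend, shift_prepend]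

lemma isHist_extend {h : List V} {v v0 v' : V} {ρ : ℕ → V} (hist : G.IsHist v0 h v)
    (hρ : G.IsPlay ρ) (h0 : ρ 0 = v) {n : ℕ} (he : G.E (ρ n) v') :
    G.IsHist v0 (h ++ playPrefix ρ (n + 1)) v' := by
  rw [prepend_eq_playPrefix_append]
  refine isHist_playPrefix_alt G (isPlay_prepend G hist hρ h0) (prepend_zero G hist h0)
    (by omega) ?_
  have : h.length + (n + 1) - 1 = h.length + n := by omega
  rw [this, prepend_add]
  exact he

lemma easy_direction {v0 : V} {βstar : Ordinal}
    (hβ : ∀ h v, G.IsHist v0 h v → G.P'set βstar h v = G.P'set (βstar + 1) h v)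
    (γ : Ordinal) : ∀ h v, G.IsHist v0 h v → G.P'set βstar h v ⊆ G.Pset γ h v := by
  induction γ using Ordinal.induction with
  | _ γ IH =>
  rcases Ordinal.zero_or_succ_or_isSuccLimit γ with h0 | ⟨δ, hδ⟩ | hl
  · subst h0; rw [Pset_zero]
    exact fun h v _ => P'set_subset_zero G βstar h v
  · subst hδ
    intro h v hist ρ hρ
    rw [← Ordinal.add_one_eq_succ, Pset_succ]
    have hδlt : δ < Order.succ δ := Order.lt_succ δ
    refine ⟨IH δ hδlt h v hist hρ, ?_⟩
    rintro ⟨n, v', hedge, hne, hall⟩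
    have hρ01 := P'set_subset_zero G βstar h v hρ
    have hist' : G.IsHist v0 (h ++ playPrefix ρ (n + 1)) v' :=
      isHist_extend G hist hρ01.1 hρ01.2 hedge
    have hρP : ρ ∈ G.P'set (βstar + 1) h v := (hβ h v hist) ▸ hρ
    rw [P'set_succ] at hρP
    obtain ⟨-, hnE⟩ := hρP
    simp only [E'set, Set.mem_setOf_eq, not_exists] at hnE
    have h1 := hnE n v' ∅
    push_neg at h1
    obtain ⟨ρ', hρ'D, hge⟩ := h1 hedge hne (Set.empty_subset _)
    exact absurd (hall ρ' (IH δ hδlt _ v' hist' (mem_Dset_empty G hρ'D))) (not_lt.mpr hge)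
  · rw [Pset_limit G hl]
    intro h v hist ρ hρ
    exact Set.mem_iInter₂.mpr fun β hβ' => IH β hβ' h v hist hρ


lemma prepend_at_len (g : List V) (ρ : ℕ → V) : prepend g ρ g.length = ρ 0 := by
  simpa using prepend_add g ρ 0

lemma prepend_shift {h' : List V} {w : ℕ → V} (hpre : playPrefix w h'.length = h') :
    prepend h' (fun m => w (h'.length + m)) = w := by
  funext n
  rcases lt_or_ge n h'.length with hn | hn
  · rw [prepend_of_lt _ _ _ hn]
    rw [← List.getElem_of_eq hpre (by simpa using hn)]
    exact playPrefix_getElem _ _ _ hn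
  · rw [prepend_of_le _ _ _ hn]
    show w (h'.length + (n - h'.length)) = w n
    congr 1
    omega

lemma mono_range {p : ℕ → ℕ} {k : ℕ} (h : ∀ j < k, p j < p (j + 1)) :
    ∀ b ≤ k, ∀ a ≤ b, p a ≤ p b := by
  intro b
  induction b with
  | zero => intro _ a ha; simp [Nat.le_zero.mp ha]
  | succ b ih =>
      intro hbk a ha
      rcases Nat.le_succ_iff.mp ha with h' | h'
      · exact (ih (by omega) a h').trans (le_of_lt (h b (by omega)))
      · subst h'; exact le_rfl

lemma w0_of_pre {w : ℕ → V} {h' : List V} {v' v0 : V} (hh' : G.IsHist v0 h' v')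
    (hL : 0 < h'.length) (hpre : playPrefix w h'.length = h') : w 0 = v0 := by
  obtain ⟨hhead, -⟩ := hh'
  rcases h' with - | ⟨a, t⟩
  · simp at hL
  · simp only [List.cons_append, List.head?_cons, Option.some.injEq] at hhead
    have h2 : w 0 = a := by
      have h3 := playPrefix_getElem w (a :: t).length 0 (by simp)
      rw [List.getElem_of_eq hpre (by simp)] at h3
      simpa using h3.symm
    rw [h2, hhead]

/-- The invariant of the recursive construction in the hard direction. -/
def Inv (G : QGame P V) (αstar γ : Ordinal) (i : P) (H : Set (List V × V))
    (h' : List V) (v' : V) (c : EReal) (k : ℕ) (w : ℕ → V) (p : ℕ → ℕ) : Prop :=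
  playPrefix w h'.length = h' ∧ w h'.length = v' ∧ G.IsPlay w ∧
  p 0 = h'.length ∧ (∀ j < k, p j < p (j + 1)) ∧
  (∀ j < k, G.owner (w (p (j + 1) - 1)) = i) ∧
  (∀ j < k, (playPrefix w (p (j + 1)), w (p (j + 1))) ∈ H) ∧
  (∀ j < k, DevStepAt (G.P'set γ) w (p j) (p (j + 1))) ∧
  (fun m => w (p k + m)) ∈ G.Pset αstar (playPrefix w (p k)) (w (p k)) ∧
  c ≤ G.cost i w

lemma inv_finDecomp {v0 : V} {αstar γ : Ordinal} {i : P} {H : Set (List V × V)}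
    {h' : List V} {v' : V} {c : EReal} {k : ℕ} {w : ℕ → V} {p : ℕ → ℕ}
    (hsub : ∀ g u, G.IsHist v0 g u → G.Pset αstar g u ⊆ G.P'set γ g u)
    (hw0 : w 0 = v0)
    (hinv : Inv G αstar γ i H h' v' c k w p) :
    G.FinDecomp (G.P'set γ) i H h' (fun m => w (h'.length + m)) k p := by
  obtain ⟨hpre, hwL, hplay, hp0, hmono, hown, hHm, hdev, htail, hcost⟩ := hinv
  have hw : prepend h' (fun m => w (h'.length + m)) = w := prepend_shift hpre
  rw [FinDecomp, hw]
  exact ⟨hp0, hmono, hown, hHm, hdev,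
    hsub _ _ (isHist_playPrefix G hplay hw0 (p k)) htail⟩


lemma inv_step {v0 : V} {αstar γ : Ordinal} {i : P} {H : Set (List V × V)}
    {h' : List V} {v' : V} {c : EReal}
    (hh' : G.IsHist v0 h' v') (hL : 0 < h'.length)
    (hα : ∀ h v, G.IsHist v0 h v → G.Pset αstar h v = G.Pset (αstar + 1) h v)
    (hsub : ∀ g u, G.IsHist v0 g u → G.Pset αstar g u ⊆ G.P'set γ g u)
    (hall : ∀ ρ' ∈ G.Dset (G.P'set γ) H i h' v', G.cost i (prepend h' ρ') < c)
    {k : ℕ} {w : ℕ → V} {p : ℕ → ℕ} (hinv : Inv G αstar γ i H h' v' c k w p) :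
    ∃ w' p', Inv G αstar γ i H h' v' c (k + 1) w' p' ∧ (∀ j ≤ k, p' j = p j) ∧
      p k < p' (k + 1) ∧ ∀ m < p' (k + 1), w' m = w m := by
  obtain ⟨hpre, hwL, hplay, hp0, hmono, hown, hHm, hdev, htail, hcost⟩ := hinv
  have hw0 : w 0 = v0 := w0_of_pre G hh' hL hpre
  have hpmono := mono_range hmono
  have hLpk : h'.length ≤ p k := by
    have := hpmono k le_rfl 0 (Nat.zero_le k); omega
  have hwprep : prepend h' (fun m => w (h'.length + m)) = w := prepend_shift hpre
  have hρk0 : (fun m => w (h'.length + m)) 0 = v' := by simpa using hwL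
  have hρkplay : G.IsPlay (fun m => w (h'.length + m)) := isPlay_shift G hplay h'.length
  have hfd : G.FinDecomp (G.P'set γ) i H h' (fun m => w (h'.length + m)) k p :=
    inv_finDecomp G hsub hw0 ⟨hpre, hwL, hplay, hp0, hmono, hown, hHm, hdev, htail, hcost⟩
  by_cases hmax : ∃ (ρ'' : ℕ → V) (q : ℕ → ℕ), ρ'' 0 = v' ∧ G.IsPlay ρ'' ∧
      (G.InfDecomp (G.P'set γ) i H h' ρ'' q ∨
        ∃ m', k < m' ∧ G.FinDecomp (G.P'set γ) i H h' ρ'' m' q) ∧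
      (∀ n ≤ k, q n = p n) ∧
      (∀ m < q (k + 1), prepend h' ρ'' m = prepend h' (fun m => w (h'.length + m)) m) ∧
      prepend h' ρ'' (q (k + 1)) ≠ prepend h' (fun m => w (h'.length + m)) (q (k + 1))
  swap
  · exfalso
    have hmem : (fun m => w (h'.length + m)) ∈ G.Dset (G.P'set γ) H i h' v' :=
      ⟨hρk0, hρkplay, Or.inr ⟨k, p, hfd, hmax⟩⟩
    have h5 := hall _ hmem
    rw [hwprep] at h5
    exact absurd h5 (not_lt.mpr hcost)
  · obtain ⟨ρ'', q, h''0, h''play, hdec, hqp, hagree, hdiff⟩ := hmax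
    rw [hwprep] at hdiff
    have hw''play : G.IsPlay (prepend h' ρ'') := isPlay_prepend G hh' h''play h''0
    have hw''agr : ∀ m < q (k + 1), prepend h' ρ'' m = w m := by
      intro m hm
      have h6 := hagree m hm
      rwa [hwprep] at h6
    have hkey : q k < q (k + 1) ∧ G.owner (prepend h' ρ'' (q (k + 1) - 1)) = i ∧
        (playPrefix (prepend h' ρ'') (q (k + 1)), prepend h' ρ'' (q (k + 1))) ∈ H := by
      rcases hdec with ⟨hq0, hsm, hown'', hH'', hdev''⟩ |
        ⟨m', hm', hq0, hlt'', hown'', hH'', hdev'', -⟩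
      · exact ⟨hsm (Nat.lt_succ_self k), hown'' k, hH'' k⟩
      · exact ⟨hlt'' k hm', hown'' k hm', hH'' k hm'⟩
    obtain ⟨hqlt, hownQ, hHQ⟩ := hkey
    have hpkQ : p k < q (k + 1) := by rw [← hqp k le_rfl]; exact hqlt
    have hQ1lt : q (k + 1) - 1 < q (k + 1) := by omega
    have hQ1 : prepend h' ρ'' (q (k + 1) - 1) = w (q (k + 1) - 1) := hw''agr _ hQ1lt
    have hedgeQ : G.E (w (q (k + 1) - 1)) (prepend h' ρ'' (q (k + 1))) := by
      have h5 := hw''play (q (k + 1) - 1)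
      rwa [show q (k + 1) - 1 + 1 = q (k + 1) by omega, hQ1] at h5
    have histcut : G.IsHist v0 (playPrefix w (p k)) (w (p k)) :=
      isHist_playPrefix G hplay hw0 (p k)
    have hτsucc : (fun m => w (p k + m)) ∈
        G.Pset (αstar + 1) (playPrefix w (p k)) (w (p k)) := (hα _ _ histcut) ▸ htail
    rw [Pset_succ] at hτsucc
    obtain ⟨-, hnE⟩ := hτsucc
    simp only [Eset, Set.mem_setOf_eq, not_exists] at hnE
    have h2 := hnE (q (k + 1) - 1 - p k) (prepend h' ρ'' (q (k + 1)))
    push_neg at h2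
    have hτQ1 : w (p k + (q (k + 1) - 1 - p k)) = w (q (k + 1) - 1) := by
      congr 1; omega
    have hτQ : w (p k + (q (k + 1) - 1 - p k + 1)) = w (q (k + 1)) := by
      congr 1; omega
    obtain ⟨τ', hτ'mem, hτ'ge⟩ := h2 (by rw [hτQ1]; exact hedgeQ) (by rw [hτQ]; exact hdiff)
    have hglist : playPrefix w (p k) ++
        playPrefix (fun m => w (p k + m)) (q (k + 1) - 1 - p k + 1)
        = playPrefix w (q (k + 1)) := by
      rw [playPrefix_append]
      congr 1
      omega
    have hownτ : G.owner (w (p k + (q (k + 1) - 1 - p k))) = i := by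
      rw [hτQ1, ← hQ1]; exact hownQ
    rw [hglist] at hτ'mem
    rw [hownτ, hglist, prepend_playPrefix_shift] at hτ'ge
    obtain ⟨hτ'play, hτ'0⟩ := Pset_subset_zero G αstar _ _ hτ'mem
    have hw'eq : ∀ m < q (k + 1), prepend (playPrefix w (q (k + 1))) τ' m = w m := by
      intro m hm
      rw [prepend_of_lt _ _ _ (by simpa using hm)]
      exact playPrefix_getElem _ _ _ hm
    have hw'Q : prepend (playPrefix w (q (k + 1))) τ' (q (k + 1)) =
        prepend h' ρ'' (q (k + 1)) := by
      have h7 := prepend_at_len (playPrefix w (q (k + 1))) τ'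
      simp only [playPrefix_length] at h7
      rw [h7, hτ'0]
    have histQ : G.IsHist v0 (playPrefix w (q (k + 1))) (prepend h' ρ'' (q (k + 1))) :=
      isHist_playPrefix_alt G hplay hw0 (by omega) hedgeQ
    have hw'play : G.IsPlay (prepend (playPrefix w (q (k + 1))) τ') :=
      isPlay_prepend G histQ hτ'play hτ'0
    have hLQ : h'.length < q (k + 1) := by omega
    refine ⟨prepend (playPrefix w (q (k + 1))) τ',
      fun j => if j ≤ k then p j else q (k + 1), ?_, ?_, ?_, ?_⟩
    · refine ⟨?_, ?_, hw'play, ?_, ?_, ?_, ?_, ?_, ?_, ?_⟩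
      · exact (playPrefix_congr (fun m hm => (hw'eq m (by omega)).symm)).symm.trans hpre
      · exact (hw'eq _ hLQ).trans hwL
      · simp only [if_pos (Nat.zero_le k)]; exact hp0
      · intro j hj
        rcases Nat.lt_succ_iff_lt_or_eq.mp hj with hj' | hj'
        · simp only [if_pos (le_of_lt hj'), if_pos (Nat.succ_le_of_lt hj')]
          exact hmono j hj'
        · subst hj'
          simp only [if_pos le_rfl, if_neg (by omega : ¬ j + 1 ≤ j)]
          exact hpkQ
      · intro j hj
        rcases Nat.lt_succ_iff_lt_or_eq.mp hj with hj' | hj'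
        · simp only [if_pos (Nat.succ_le_of_lt hj')]
          have hle : p (j + 1) ≤ p k := hpmono k le_rfl (j + 1) hj'
          rw [hw'eq _ (by omega)]
          exact hown j hj'
        · subst hj'
          simp only [if_neg (by omega : ¬ j + 1 ≤ j)]
          rw [hw'eq _ hQ1lt, ← hQ1]
          exact hownQ
      · intro j hj
        rcases Nat.lt_succ_iff_lt_or_eq.mp hj with hj' | hj'
        · simp only [if_pos (Nat.succ_le_of_lt hj')]
          have hle : p (j + 1) ≤ p k := hpmono k le_rfl (j + 1) hj'
          rw [hw'eq _ (by omega),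
            playPrefix_congr (fun m hm => hw'eq m (by omega))]
          exact hHm j hj'
        · subst hj'
          simp only [if_neg (by omega : ¬ j + 1 ≤ j)]
          rw [hw'Q, playPrefix_congr (fun m hm => hw'eq m (by omega)),
            playPrefix_congr (fun m hm => (hw''agr m (by omega)).symm)]
          exact hHQ
      · intro j hj
        rcases Nat.lt_succ_iff_lt_or_eq.mp hj with hj' | hj'
        · simp only [if_pos (le_of_lt hj'), if_pos (Nat.succ_le_of_lt hj')]
          have hle : p (j + 1) ≤ p k := hpmono k le_rfl (j + 1) hj'
          exact devStepAt_congr (fun m hm => (hw'eq m (by omega)).symm) (hdev j hj')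
        · subst hj'
          simp only [if_pos le_rfl, if_neg (by omega : ¬ j + 1 ≤ j)]
          refine ⟨hpkQ, (fun m => w (p j + m)), ?_, ?_, ?_⟩
          · rw [hw'eq _ (by omega), playPrefix_congr (fun m hm => hw'eq m (by omega))]
            exact hsub _ _ histcut htail
          · intro k' hk'
            exact (hw'eq _ hk').symm
          · show w (p j + (q (j + 1) - p j)) ≠ _
            rw [show p j + (q (j + 1) - p j) = q (j + 1) from by omega, hw'Q]
            exact Ne.symm hdiff
      · simp only [if_neg (by omega : ¬ k + 1 ≤ k)]
        have hsh : (fun m => prepend (playPrefix w (q (k + 1))) τ' (q (k + 1) + m)) = τ' := by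
          have h8 := shift_prepend (playPrefix w (q (k + 1))) τ'
          simpa using h8
        rw [hsh, hw'Q, playPrefix_congr (fun m hm => hw'eq m (by omega))]
        exact hτ'mem
      · exact hcost.trans hτ'ge
    · intro j hj
      simp only [if_pos hj]
    · simp only [if_neg (by omega : ¬ k + 1 ≤ k)]
      exact hpkQ
    · simp only [if_neg (by omega : ¬ k + 1 ≤ k)]
      exact hw'eq


private def chooseSeq {X : Type} (Q : ℕ → X → Prop) (g : ∀ k x, Q k x → X) (x0 : X) :
    ℕ → X
  | 0 => x0
  | (k + 1) =>
      if h : Q k (chooseSeq Q g x0 k) then g k (chooseSeq Q g x0 k) h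
      else chooseSeq Q g x0 k

lemma nat_rec_choice {X : Type} {Q : ℕ → X → Prop} {R : ℕ → X → X → Prop}
    (h0 : ∃ x, Q 0 x) (hstep : ∀ k x, Q k x → ∃ y, Q (k + 1) y ∧ R k x y) :
    ∃ f : ℕ → X, (∀ k, Q k (f k)) ∧ ∀ k, R k (f k) (f (k + 1)) := by
  obtain ⟨x0, hx0⟩ := h0
  choose g hg1 hg2 using hstep
  have key : ∀ k, Q k (chooseSeq Q g x0 k) := by
    intro k
    induction k with
    | zero => exact hx0
    | succ k ih =>
        rw [chooseSeq, dif_pos ih]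
        exact hg1 k _ ih
  refine ⟨chooseSeq Q g x0, key, fun k => ?_⟩
  have e : chooseSeq Q g x0 (k + 1) = g k (chooseSeq Q g x0 k) (key k) := by
    rw [chooseSeq, dif_pos (key k)]
  rw [e]
  exact hg2 k _ (key k)

lemma hard_direction {v0 : V} {αstar : Ordinal}
    (husc : ∀ i, G.USCcost (G.cost i))
    (hα : ∀ h v, G.IsHist v0 h v → G.Pset αstar h v = G.Pset (αstar + 1) h v)
    (γ : Ordinal) : ∀ h v, G.IsHist v0 h v → G.Pset αstar h v ⊆ G.P'set γ h v := by
  induction γ using Ordinal.induction with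
  | _ γ IH =>
  rcases Ordinal.zero_or_succ_or_isSuccLimit γ with h0 | ⟨δ, hδ⟩ | hl
  · subst h0; rw [P'set_zero]
    exact fun h v _ => Pset_subset_zero G αstar h v
  · subst hδ
    intro h v hist ρ hρ
    rw [← Ordinal.add_one_eq_succ, P'set_succ]
    have hsub : ∀ g u, G.IsHist v0 g u → G.Pset αstar g u ⊆ G.P'set δ g u :=
      fun g u hg => IH δ (Order.lt_succ δ) g u hg
    refine ⟨hsub h v hist hρ, ?_⟩
    rintro ⟨n, v', H, hedge, hne, hHsub, hall⟩
    obtain ⟨hρplay, hρ0⟩ := Pset_subset_zero G αstar h v hρ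
    have hist' : G.IsHist v0 (h ++ playPrefix ρ (n + 1)) v' :=
      isHist_extend G hist hρplay hρ0 hedge
    have hL : 0 < (h ++ playPrefix ρ (n + 1)).length := by simp
    have hρsucc : ρ ∈ G.Pset (αstar + 1) h v := (hα h v hist) ▸ hρ
    rw [Pset_succ] at hρsucc
    obtain ⟨-, hnE⟩ := hρsucc
    simp only [Eset, Set.mem_setOf_eq, not_exists] at hnE
    have h1 := hnE n v'
    push_neg at h1
    obtain ⟨ρ₀, hρ₀mem, hρ₀ge⟩ := h1 hedge hne
    obtain ⟨hρ₀play, hρ₀0⟩ := Pset_subset_zero G αstar _ _ hρ₀mem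
    have inv0 : Inv G αstar δ (G.owner (ρ n)) H (h ++ playPrefix ρ (n + 1)) v'
        (G.cost (G.owner (ρ n)) (prepend h ρ)) 0 (prepend (h ++ playPrefix ρ (n + 1)) ρ₀)
        (fun _ => (h ++ playPrefix ρ (n + 1)).length) := by
      refine ⟨playPrefix_prepend _ _, ?_, isPlay_prepend G hist' hρ₀play hρ₀0, rfl,
        ?_, ?_, ?_, ?_, ?_, hρ₀ge⟩
      · rw [prepend_at_len, hρ₀0]
      · intro j hj; exact absurd hj (Nat.not_lt_zero j)
      · intro j hj; exact absurd hj (Nat.not_lt_zero j)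
      · intro j hj; exact absurd hj (Nat.not_lt_zero j)
      · intro j hj; exact absurd hj (Nat.not_lt_zero j)
      · rw [playPrefix_prepend, shift_prepend, prepend_at_len, hρ₀0]
        exact hρ₀mem
    obtain ⟨f, hfQ, hfR⟩ := nat_rec_choice (X := (ℕ → V) × (ℕ → ℕ))
      (Q := fun k x => Inv G αstar δ (G.owner (ρ n)) H (h ++ playPrefix ρ (n + 1)) v'
        (G.cost (G.owner (ρ n)) (prepend h ρ)) k x.1 x.2)
      (R := fun k x y => (∀ j ≤ k, y.2 j = x.2 j) ∧ x.2 k < y.2 (k + 1) ∧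
        ∀ m < y.2 (k + 1), y.1 m = x.1 m)
      ⟨(prepend (h ++ playPrefix ρ (n + 1)) ρ₀,
        fun _ => (h ++ playPrefix ρ (n + 1)).length), inv0⟩
      (fun k x hx => by
        obtain ⟨w', p', h1', h2', h3', h4'⟩ := inv_step G hist' hL hα hsub hall hx
        exact ⟨(w', p'), h1', h2', h3', h4'⟩)
    -- cut stabilization
    have hB : ∀ k l, k ≤ l → ∀ j ≤ k, (f l).2 j = (f k).2 j := by
      intro k l hkl
      induction l with
      | zero =>
          intro j hj
          have hk0 : k = 0 := by omega
          subst hk0; rfl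
      | succ l ih =>
          intro j hj
          rcases Nat.le_succ_iff.mp hkl with hkl' | hkl'
          · rw [(hfR l).1 j (by omega), ih hkl' j hj]
          · subst hkl'; rfl
    have hpp : ∀ k, (f k).2 k < (f (k + 1)).2 (k + 1) := fun k => (hfR k).2.1
    have hPmono : StrictMono (fun k => (f k).2 k) := strictMono_nat_of_lt_succ hpp
    -- word stabilization
    have hDst : ∀ k l, k ≤ l → ∀ m < (f (k + 1)).2 (k + 1), (f l).1 m = (f k).1 m := by
      intro k l hkl
      induction l with
      | zero =>
          intro m hm
          have hk0 : k = 0 := by omega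
          subst hk0; rfl
      | succ l ih =>
          intro m hm
          rcases Nat.le_succ_iff.mp hkl with hkl' | hkl'
          · have hmlt : m < (f (l + 1)).2 (l + 1) :=
              lt_of_lt_of_le hm (hPmono.monotone (Nat.succ_le_succ hkl'))
            rw [(hfR l).2.2 m hmlt, ih hkl' m hm]
          · subst hkl'; rfl
    have hE : ∀ k m, m < (f (k + 1)).2 (k + 1) → (fun m => (f (m + 1)).1 m) m = (f k).1 m := by
      intro k m hm
      simp only
      rcases le_or_gt k (m + 1) with hk | hk
      · exact hDst k (m + 1) hk m hm
      · refine (hDst (m + 1) k (le_of_lt hk) m ?_).symm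
        have h8 : m + 1 + 1 ≤ (f (m + 1 + 1)).2 (m + 1 + 1) := hPmono.le_apply
        omega
    have hconv : Converges (fun k => (f k).1) (fun m => (f (m + 1)).1 m) := by
      intro m
      refine ⟨m + 1, fun l hl k hk => ?_⟩
      have h9 : k < (f (l + 1)).2 (l + 1) := by
        have h8 : l + 1 ≤ (f (l + 1)).2 (l + 1) := hPmono.le_apply
        omega
      exact (hE l k h9).symm
    have hwinfplay : G.IsPlay (fun m => (f (m + 1)).1 m) := by
      intro m
      have h8 : m + 1 + 1 ≤ (f (m + 1 + 1)).2 (m + 1 + 1) := hPmono.le_apply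
      have e2 : (fun m => (f (m + 1)).1 m) (m + 1) = (f (m + 1)).1 (m + 1) :=
        hE (m + 1) (m + 1) (by omega)
      have e1 : (fun m => (f (m + 1)).1 m) m = (f (m + 1)).1 m := by
        exact hE (m + 1) m (by omega)
      show G.E ((fun m => (f (m + 1)).1 m) m) ((fun m => (f (m + 1)).1 m) (m + 1))
      rw [e1, e2]
      exact (hfQ (m + 1)).2.2.1 m
    have hcostinf : G.cost (G.owner (ρ n)) (prepend h ρ) ≤
        G.cost (G.owner (ρ n)) (fun m => (f (m + 1)).1 m) := by
      have h10 := husc (G.owner (ρ n)) (fun k => (f k).1) (fun m => (f (m + 1)).1 m)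
        (fun k => (hfQ k).2.2.1) hwinfplay hconv
      have h11 := le_limsup_of_forall
        (f := fun k => G.cost (G.owner (ρ n)) ((f k).1))
        (fun k => (hfQ k).2.2.2.2.2.2.2.2.2)
      exact h11.trans h10
    have hval0 : (f 0).2 0 = (h ++ playPrefix ρ (n + 1)).length := (hfQ 0).2.2.2.1
    have hLlt1 : (h ++ playPrefix ρ (n + 1)).length < (f (0 + 1)).2 (0 + 1) := by
      have h8 := hpp 0
      omega
    have hpre0 : playPrefix (fun m => (f (m + 1)).1 m) (h ++ playPrefix ρ (n + 1)).length
        = h ++ playPrefix ρ (n + 1) := by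
      rw [playPrefix_congr (fun m hm => hE 0 m (by omega))]
      exact (hfQ 0).1
    have hwinfL : (fun m => (f (m + 1)).1 m) (h ++ playPrefix ρ (n + 1)).length = v' := by
      rw [hE 0 _ (by omega)]
      exact (hfQ 0).2.1
    have hwprepinf : prepend (h ++ playPrefix ρ (n + 1))
        (fun m => (fun m => (f (m + 1)).1 m) ((h ++ playPrefix ρ (n + 1)).length + m))
        = (fun m => (f (m + 1)).1 m) := prepend_shift hpre0
    have hinf : G.InfDecomp (G.P'set δ) (G.owner (ρ n)) H (h ++ playPrefix ρ (n + 1))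
        (fun m => (fun m => (f (m + 1)).1 m) ((h ++ playPrefix ρ (n + 1)).length + m))
        (fun k => (f k).2 k) := by
      rw [InfDecomp, hwprepinf]
      refine ⟨hval0, hPmono, ?_, ?_, ?_⟩
      · intro k
        have h8 := hpp (k + 1)
        rw [hE (k + 1) _ (by omega)]
        exact (hfQ (k + 1)).2.2.2.2.2.1 k (Nat.lt_succ_self k)
      · intro k
        have h8 := hpp (k + 1)
        rw [hE (k + 1) _ (by omega),
          playPrefix_congr (fun m hm => hE (k + 1) m (by omega))]
        exact (hfQ (k + 1)).2.2.2.2.2.2.1 k (Nat.lt_succ_self k)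
      · intro k
        have h8 := hpp (k + 1)
        have h13 : (f (k + 1)).2 k = (f k).2 k := hB k (k + 1) (Nat.le_succ k) k le_rfl
        have h14 := (hfQ (k + 1)).2.2.2.2.2.2.2.1 k (Nat.lt_succ_self k)
        rw [h13] at h14
        exact devStepAt_congr (fun m hm => (hE (k + 1) m (by omega)).symm) h14
    have hmem : (fun m => (fun m => (f (m + 1)).1 m)
        ((h ++ playPrefix ρ (n + 1)).length + m)) ∈
        G.Dset (G.P'set δ) H (G.owner (ρ n)) (h ++ playPrefix ρ (n + 1)) v' := by
      refine ⟨by simpa using hwinfL, isPlay_shift G hwinfplay _, Or.inl ⟨_, hinf⟩⟩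
    have h12 := hall _ hmem
    rw [hwprepinf] at h12
    exact absurd h12 (not_lt.mpr hcostinf)
  · rw [P'set_limit G hl]
    intro h v hist ρ hρ
    exact Set.mem_iInter₂.mpr fun β hβ' => IH β hβ' h v hist hρ

end QGameAux

open QGame in
/-- For upper-semicontinuous cost functions the two
transfinite hierarchies coincide at their fixpoints: if `α*` is a fixpoint
of the weak-SPE hierarchy `P` and `β*` a fixpoint of the SPE hierarchy `P'`,
then `P'_{β*}(hv) = P_{α*}(hv)` for every history `hv` of `(G, v0)`. -/
theorem P'set_fixpoint_eq_Pset_fixpoint {P V : Type} [Finite P] [Finite V]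
    (G : QGame P V) (v0 : V)
    (husc : ∀ i, G.USCcost (G.cost i))
    (αstar βstar : Ordinal)
    (hα : ∀ h v, G.IsHist v0 h v → G.Pset αstar h v = G.Pset (αstar + 1) h v)
    (hβ : ∀ h v, G.IsHist v0 h v → G.P'set βstar h v = G.P'set (βstar + 1) h v) :
    ∀ h v, G.IsHist v0 h v → G.P'set βstar h v = G.Pset αstar h v := by
  intro h v hist
  apply Set.Subset.antisymm
  · exact QGameAux.easy_direction G hβ αstar h v hist
  · exact QGameAux.hard_direction G husc hα βstar h v hist
end
end

section
/- Uniform boundedness of finite reachability costs in the potential-outcome sets: in a quantitative reachability game, for any history hv, ordinal α, and player i, if every play ρ ∈ P_α(hv) satisfies λ_i(ρ) < +∞, then there exists a constant c ∈ ℕ such that λ_i(ρ) ≤ c for all ρ ∈ P_α(hv). Equivalently, the sets P_α(hv) are closed in V^ω. -/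
open Classical

noncomputable section

section Auxiliary

open QGame

variable {P V : Type}

lemma cyl_open [TopologicalSpace V] [DiscreteTopology V] (ρ : ℕ → V) (N : ℕ) :
    IsOpen {ρ' : ℕ → V | ∀ k ≤ N, ρ' k = ρ k} := by
  have hopen : ∀ k : ℕ, IsOpen {ρ' : ℕ → V | ρ' k = ρ k} := by
    intro k
    have hc : Continuous (fun σ : ℕ → V => σ k) := continuous_apply k
    exact (isOpen_discrete ({ρ k} : Set V)).preimage hc
  have heq : {ρ' : ℕ → V | ∀ k ≤ N, ρ' k = ρ k}
      = ⋂ k ∈ Finset.range (N + 1), {ρ' : ℕ → V | ρ' k = ρ k} := by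
    ext ρ'; simp [Nat.lt_succ_iff]
  rw [heq]
  exact isOpen_biInter_finset fun k _ => hopen k

lemma open_of_cyl [TopologicalSpace V] [DiscreteTopology V] {S : Set (ℕ → V)}
    (hS : ∀ ρ ∈ S, ∃ N, ∀ ρ', (∀ k ≤ N, ρ' k = ρ k) → ρ' ∈ S) : IsOpen S := by
  rw [isOpen_iff_forall_mem_open]
  intro ρ hρ
  obtain ⟨N, hN⟩ := hS ρ hρ
  exact ⟨_, fun ρ' hρ' => hN ρ' hρ', cyl_open ρ N, fun k _ => rfl⟩

lemma closed_of_cyl [TopologicalSpace V] [DiscreteTopology V] {S : Set (ℕ → V)}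
    (hS : ∀ ρ ∉ S, ∃ N, ∀ ρ', (∀ k ≤ N, ρ' k = ρ k) → ρ' ∉ S) : IsClosed S := by
  rw [← isOpen_compl_iff]
  exact open_of_cyl hS

lemma reachCost_natCast_lt {W : Set V} {σ : ℕ → V} {m : ℕ} :
    (m : EReal) < reachCost W σ ↔ ∀ k ≤ m, σ k ∉ W := by
  classical
  unfold reachCost
  split_ifs with hex
  · rw [show ((m : EReal) < ((Nat.find hex : ℕ) : EReal)) ↔ m < Nat.find hex by simp,
      Nat.lt_find_iff]
  · simp only [(EReal.natCast_ne_top m).lt_top, true_iff]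
    intro k _ hk
    exact hex ⟨k, hk⟩

lemma reachCost_le_natCast {W : Set V} {σ : ℕ → V} {m : ℕ} :
    reachCost W σ ≤ (m : EReal) ↔ ∃ k ≤ m, σ k ∈ W := by
  rw [← not_lt, reachCost_natCast_lt]
  push_neg
  rfl

lemma reachCost_exists_nat {W : Set V} {σ : ℕ → V} (hlt : reachCost W σ < ⊤) :
    ∃ m : ℕ, reachCost W σ = (m : EReal) := by
  classical
  unfold reachCost at *
  split_ifs at * with hex
  · exact ⟨_, rfl⟩
  · exact absurd hlt (lt_irrefl _)

lemma continuous_prepend [TopologicalSpace V] (h : List V) :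
    Continuous (fun ρ : ℕ → V => prepend h ρ) := by
  refine continuous_pi fun n => ?_
  by_cases hn : n < h.length
  · simpa [prepend, hn] using continuous_const
  · simpa [prepend, hn] using continuous_apply (n - h.length)

lemma bounded_aux [Finite V] [TopologicalSpace V] [DiscreteTopology V]
    {S : Set (ℕ → V)} (hS : IsClosed S) (W : Set V)
    {g : (ℕ → V) → ℕ → V} (hg : Continuous g)
    (hfin : ∀ ρ ∈ S, reachCost W (g ρ) < ⊤) :
    ∃ c : ℕ, ∀ ρ ∈ S, reachCost W (g ρ) ≤ (c : EReal) := by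
  by_contra hc
  push_neg at hc
  set C : ℕ → Set (ℕ → V) := fun n => S ∩ {ρ | ∀ k ≤ n, g ρ k ∉ W} with hC
  have hclosed : ∀ n, IsClosed (C n) := by
    intro n
    refine hS.inter ?_
    have heq : {ρ : ℕ → V | ∀ k ≤ n, g ρ k ∉ W}
        = ⋂ k ∈ Finset.range (n + 1), (fun ρ => g ρ k) ⁻¹' Wᶜ := by
      ext ρ; simp [Nat.lt_succ_iff]
    rw [heq]
    refine isClosed_biInter fun k _ => ?_
    exact (isClosed_discrete Wᶜ).preimage ((continuous_apply k).comp hg)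
  have hsub : ∀ n, C (n + 1) ⊆ C n := by
    intro n ρ hρ
    exact ⟨hρ.1, fun k hk => hρ.2 k (hk.trans (Nat.le_succ n))⟩
  have hne : ∀ n, (C n).Nonempty := by
    intro n
    obtain ⟨ρ, hρS, hρn⟩ := hc n
    exact ⟨ρ, hρS, reachCost_natCast_lt.1 hρn⟩
  have hcompact : IsCompact (C 0) := (hclosed 0).isCompact
  obtain ⟨ρ, hρ⟩ := hcompact.nonempty_iInter_of_sequence_nonempty_isCompact_isClosed
    C hsub hne hclosed
  simp only [Set.mem_iInter] at hρ
  have hρS : ρ ∈ S := (hρ 0).1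
  obtain ⟨m, hm⟩ := reachCost_exists_nat (hfin ρ hρS)
  have : (m : EReal) < reachCost W (g ρ) := by
    rw [reachCost_natCast_lt]
    intro k hk
    exact (hρ m).2 k hk
  rw [hm] at this
  exact lt_irrefl _ this

lemma Pset_zero_eq (G : QGame P V) (h : List V) (v : V) :
    G.Pset 0 h v = {ρ | G.IsPlay ρ ∧ ρ 0 = v} := by
  unfold QGame.Pset
  rw [Ordinal.limitRecOn_zero]

lemma Pset_succ_eq (G : QGame P V) (α : Ordinal) (h : List V) (v : V) :
    G.Pset (Order.succ α) h v = G.Pset α h v \ G.Eset (G.Pset α) h := by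
  unfold QGame.Pset
  rw [Ordinal.limitRecOn_succ]

lemma Pset_limit_eq (G : QGame P V) (α : Ordinal) (hα : Order.IsSuccLimit α) (h : List V) (v : V) :
    G.Pset α h v = ⋂ (β : Ordinal) (_ : β < α), G.Pset β h v := by
  unfold QGame.Pset
  rw [Ordinal.limitRecOn_limit _ _ _ _ hα]

lemma prepend_congr (h : List V) {ρ ρ' : ℕ → V} {s : ℕ}
    (hagree : ∀ k ≤ s, ρ' k = ρ k) :
    ∀ k ≤ h.length + s, prepend h ρ' k = prepend h ρ k := by
  intro k hk
  unfold prepend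
  split_ifs with hkl
  · rfl
  · exact hagree (k - h.length) (by omega)

lemma Pset_closed [Finite P] [Finite V] [TopologicalSpace V] [DiscreteTopology V]
    (G : QGame P V) (T : P → Set V) (hT : G.IsReachGame T) (α : Ordinal) :
    ∀ (h : List V) (v : V), IsClosed (G.Pset α h v) := by
  induction α using Ordinal.limitRecOn with
  | zero =>
    intro h v
    rw [Pset_zero_eq]
    refine closed_of_cyl fun ρ hρ => ?_
    simp only [Set.mem_setOf_eq, not_and_or] at hρ
    rcases hρ with hρ | hρ
    · have hp : ¬ G.IsPlay ρ := hρ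
      rw [QGame.IsPlay] at hp
      push_neg at hp
      obtain ⟨n, hn⟩ := hp
      refine ⟨n + 1, fun ρ' hρ' => ?_⟩
      simp only [Set.mem_setOf_eq, not_and_or]
      left
      intro hplay
      rw [← hρ' n (by omega), ← hρ' (n + 1) (by omega)] at hn
      exact hn (hplay n)
    · refine ⟨0, fun ρ' hρ' => ?_⟩
      simp only [Set.mem_setOf_eq, not_and_or]
      right
      rw [hρ' 0 (le_refl 0)]
      exact hρ
  | add_one α ih =>
    intro h v
    rw [Ordinal.add_one_eq_succ, Pset_succ_eq]
    refine (ih h v).sdiff ?_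
    refine open_of_cyl fun ρ hρ => ?_
    obtain ⟨n, v', hE, hne, hall⟩ := hρ
    classical
    set j := G.owner (ρ n) with hj
    set h' := h ++ playPrefix ρ (n + 1) with hh'
    by_cases hS' : (G.Pset α h' v').Nonempty
    · -- all costs of the sub-Pset are finite
      have hfin' : ∀ ρ' ∈ G.Pset α h' v', reachCost (T j) (prepend h' ρ') < ⊤ := by
        intro ρ' hρ'
        have := hall ρ' hρ'
        rw [hT, hT] at this
        exact this.trans_le le_top
      obtain ⟨c, hc⟩ := bounded_aux (ih h' v') (T j) (continuous_prepend h') hfin'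
      -- the finite set of achieved cost values
      set A : Finset ℕ := (Finset.range (c + 1)).filter
        (fun m => ∃ ρ' ∈ G.Pset α h' v', reachCost (T j) (prepend h' ρ') = (m : EReal))
        with hA
      have hAne : A.Nonempty := by
        obtain ⟨ρ₀, hρ₀⟩ := hS'
        obtain ⟨m, hm⟩ := reachCost_exists_nat (hfin' ρ₀ hρ₀)
        have hmc : m ≤ c := by
          have := hc ρ₀ hρ₀
          rw [hm] at this
          exact_mod_cast this
        exact ⟨m, Finset.mem_filter.2 ⟨Finset.mem_range.2 (by omega), ρ₀, hρ₀, hm⟩⟩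
      set s := A.max' hAne with hs
      have hsA : s ∈ A := A.max'_mem hAne
      obtain ⟨-, ρₛ, hρₛ, hρₛcost⟩ := Finset.mem_filter.1 hsA
      -- all costs are at most s
      have hboundS : ∀ ρ' ∈ G.Pset α h' v', reachCost (T j) (prepend h' ρ') ≤ (s : EReal) := by
        intro ρ' hρ'
        obtain ⟨m, hm⟩ := reachCost_exists_nat (hfin' ρ' hρ')
        have hmc : m ≤ c := by
          have := hc ρ' hρ'
          rw [hm] at this
          exact_mod_cast this
        have hmA : m ∈ A := Finset.mem_filter.2 ⟨Finset.mem_range.2 (by omega), ρ', hρ', hm⟩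
        rw [hm]
        exact_mod_cast A.le_max' m hmA
      -- ρ's cost (in the big game) exceeds s
      have hρs : (s : EReal) < reachCost (T j) (prepend h ρ) := by
        have := hall ρₛ hρₛ
        rw [hT, hT, hρₛcost] at this
        exact this
      have havoid : ∀ k ≤ s, prepend h ρ k ∉ T j := reachCost_natCast_lt.1 hρs
      refine ⟨h.length + s + n + 1, fun ρ'' hagree => ?_⟩
      have hpre : playPrefix ρ'' (n + 1) = playPrefix ρ (n + 1) := by
        unfold playPrefix
        exact congrArg List.ofFn (funext fun k => hagree k (by omega))
      have hρn : ρ'' n = ρ n := hagree n (by omega)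
      have hρn1 : ρ'' (n + 1) = ρ (n + 1) := hagree (n + 1) (by omega)
      refine ⟨n, v', by rw [hρn]; exact hE, by rw [hρn1]; exact hne, ?_⟩
      intro ρ' hρ'
      rw [hpre] at hρ'
      have hρ'' : ρ' ∈ G.Pset α h' v' := by rw [hh']; exact hρ'
      rw [hpre, hT, hT, hρn]
      refine lt_of_le_of_lt (hboundS ρ' hρ'') ?_
      rw [reachCost_natCast_lt]
      intro k hk
      rw [prepend_congr h (s := h.length + s + n + 1)
        (fun k' hk' => hagree k' hk') k (by omega)]
      exact havoid k hk
    · -- empty sub-Pset: the universal condition is vacuous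
      rw [Set.not_nonempty_iff_eq_empty] at hS'
      refine ⟨n + 1, fun ρ'' hagree => ?_⟩
      have hpre : playPrefix ρ'' (n + 1) = playPrefix ρ (n + 1) := by
        unfold playPrefix
        exact congrArg List.ofFn (funext fun k => hagree k (by omega))
      have hρn : ρ'' n = ρ n := hagree n (by omega)
      have hρn1 : ρ'' (n + 1) = ρ (n + 1) := hagree (n + 1) (le_refl _)
      refine ⟨n, v', by rw [hρn]; exact hE, by rw [hρn1]; exact hne, ?_⟩
      intro ρ' hρ'
      rw [hpre] at hρ'
      have hρ'' : ρ' ∈ G.Pset α h' v' := by rw [hh']; exact hρ'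
      rw [hS'] at hρ''
      exact absurd hρ'' (Set.notMem_empty ρ')
  | limit α hα ih =>
    intro h v
    rw [Pset_limit_eq G α hα]
    exact isClosed_iInter fun β => isClosed_iInter fun hβ => ih β hβ h v

end Auxiliary

open QGame in
/-- Uniform boundedness of finite reachability costs in the
potential-outcome sets: in a quantitative reachability game, if every play
of `P_α(hv)` has finite cost for player `i`, then the costs of the plays of
`P_α(hv)` for player `i` are uniformly bounded by some constant `c ∈ ℕ`.
Equivalently, each set `P_α(hv)` is closed in `V^ω` (product topology over
the discrete topology on `V`). -/
theorem reach_Pset_cost_bounded {P V : Type} [Finite P] [Finite V]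
    (G : QGame P V) (T : P → Set V) (hT : G.IsReachGame T)
    (α : Ordinal) (h : List V) (v : V) (i : P)
    (hfin : ∀ ρ ∈ G.Pset α h v, G.cost i ρ < ⊤) :
    (∃ c : ℕ, ∀ ρ ∈ G.Pset α h v, G.cost i ρ ≤ (c : EReal)) ∧
    @IsClosed (ℕ → V) (@Pi.topologicalSpace ℕ (fun _ => V) (fun _ => ⊥))
      (G.Pset α h v) := by
  classical
  letI : TopologicalSpace V := ⊥
  haveI : DiscreteTopology V := ⟨rfl⟩
  have hclosed : IsClosed (G.Pset α h v) := Pset_closed G T hT α h v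
  refine ⟨?_, hclosed⟩
  have hfin' : ∀ ρ ∈ G.Pset α h v, reachCost (T i) (id ρ) < ⊤ := by
    intro ρ hρ
    have := hfin ρ hρ
    rwa [hT] at this
  obtain ⟨c, hc⟩ := bounded_aux hclosed (T i) continuous_id hfin'
  exact ⟨c, fun ρ hρ => by rw [hT]; exact hc ρ hρ⟩
end
end

section
/- In a quantitative reachability game, the set P_α(hv) depends only on the last vertex v and on the set of players who have not yet reached their targets along h: if histories h_1 v and h_2 v satisfy I(h_1) = I(h_2), then P_α(h_1 v) = P_α(h_2 v) for every ordinal α. -/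
open Classical

noncomputable section

namespace QGame

variable {P V : Type}

lemma Iset_append' (T : P → Set V) (h g : List V) :
    Iset T (h ++ g) = Iset T h ∩ Iset T g := by
  ext i
  simp only [Iset, Set.mem_setOf_eq, Set.mem_inter_iff, List.mem_append]
  constructor
  · exact fun H => ⟨fun u hu => H u (Or.inl hu), fun u hu => H u (Or.inr hu)⟩
  · rintro ⟨H1, H2⟩ u (hu | hu)
    · exact H1 u hu
    · exact H2 u hu

lemma prepend_eq_prepend_append (h : List V) (ρ : ℕ → V) (m : ℕ) :
    prepend h ρ = prepend (h ++ playPrefix ρ m) (fun k => ρ (k + m)) := by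
  have hlen : (h ++ playPrefix ρ m).length = h.length + m := by
    simp [playPrefix]
  funext k
  simp only [prepend]
  by_cases hk : k < h.length
  · rw [dif_pos hk, dif_pos (by omega : k < (h ++ playPrefix ρ m).length)]
    simp only [List.get_eq_getElem]
    rw [List.getElem_append_left hk]
  · rw [dif_neg hk]
    by_cases hk2 : k < (h ++ playPrefix ρ m).length
    · rw [dif_pos hk2]
      simp only [List.get_eq_getElem]
      rw [List.getElem_append_right (by omega)]
      simp only [playPrefix, List.getElem_ofFn]
    · rw [dif_neg hk2]
      congr 1
      omega

lemma reachCost_prepend_of_forall (S : Set V) (h : List V) (ρ : ℕ → V)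
    (hh : ∀ u ∈ h, u ∉ S) :
    reachCost S (prepend h ρ) = (h.length : EReal) + reachCost S ρ := by
  have hmem : ∀ n (hn : n < h.length), prepend h ρ n ∉ S := by
    intro n hn
    rw [prepend, dif_pos hn]
    exact hh _ (List.get_mem _ _)
  have hge : ∀ n, h.length ≤ n → prepend h ρ n = ρ (n - h.length) := by
    intro n hn
    rw [prepend, dif_neg (by omega)]
  unfold reachCost
  by_cases hex : ∃ n, ρ n ∈ S
  · have hex' : ∃ n, prepend h ρ n ∈ S :=
      ⟨h.length + Nat.find hex, by
        rw [hge _ (by omega)]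
        simpa using Nat.find_spec hex⟩
    rw [dif_pos hex', dif_pos hex]
    have hfind : Nat.find hex' = h.length + Nat.find hex := by
      apply le_antisymm
      · apply Nat.find_le
        rw [hge _ (by omega)]
        simpa using Nat.find_spec hex
      · have hsp := Nat.find_spec hex'
        have hlen : h.length ≤ Nat.find hex' := by
          by_contra hc
          exact hmem _ (by omega) hsp
        rw [hge _ hlen] at hsp
        have : Nat.find hex ≤ Nat.find hex' - h.length := Nat.find_le hsp
        omega
    rw [hfind]
    push_cast
    rfl
  · have hex' : ¬ ∃ n, prepend h ρ n ∈ S := by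
      rintro ⟨n, hn⟩
      by_cases hlt : n < h.length
      · exact hmem _ hlt hn
      · rw [hge _ (by omega)] at hn
        exact hex ⟨_, hn⟩
    rw [dif_neg hex', dif_neg hex]
    exact (EReal.add_top_of_ne_bot (EReal.natCast_ne_bot _)).symm

lemma reachCost_prepend_of_exists (S : Set V) (h : List V) (ρ ρ' : ℕ → V)
    (hh : ∃ u ∈ h, u ∈ S) :
    reachCost S (prepend h ρ) = reachCost S (prepend h ρ') := by
  obtain ⟨u, hu, huS⟩ := hh
  obtain ⟨j, hj, rfl⟩ := List.mem_iff_getElem.1 hu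
  have H : ∀ σ : ℕ → V, ∃ n, prepend h σ n ∈ S := by
    intro σ
    exact ⟨j, by rw [prepend, dif_pos hj]; simpa using huS⟩
  have key : ∀ σ τ : ℕ → V, Nat.find (H σ) ≤ Nat.find (H τ) := by
    intro σ τ
    have hle : Nat.find (H τ) ≤ j := Nat.find_le (by rw [prepend, dif_pos hj]; simpa using huS)
    have hlt : Nat.find (H τ) < h.length := lt_of_le_of_lt hle hj
    apply Nat.find_le
    have hsp := Nat.find_spec (H τ)
    rw [prepend, dif_pos hlt] at hsp ⊢
    exact hsp
  unfold reachCost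
  rw [dif_pos (H ρ), dif_pos (H ρ')]
  exact_mod_cast congrArg (Nat.cast : ℕ → EReal) (le_antisymm (key ρ ρ') (key ρ' ρ))

lemma ereal_nat_add_lt_add_iff (a : ℕ) (x y : EReal) :
    (a : EReal) + x < (a : EReal) + y ↔ x < y := by
  constructor
  · intro hlt
    by_contra hle
    exact absurd (add_le_add le_rfl (not_lt.1 hle)) hlt.not_ge
  · intro hlt
    have := EReal.add_lt_add_left_coe hlt (a : ℝ)
    simpa using this

lemma reach_lt_iff (S : Set V) (H₁ H₂ : List V)
    (hS : (∀ u ∈ H₁, u ∉ S) ↔ (∀ u ∈ H₂, u ∉ S)) (ρ ρ' : ℕ → V) :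
    (reachCost S (prepend H₁ ρ') < reachCost S (prepend H₁ ρ)) ↔
    (reachCost S (prepend H₂ ρ') < reachCost S (prepend H₂ ρ)) := by
  by_cases h1 : ∀ u ∈ H₁, u ∉ S
  · have h2 := hS.1 h1
    rw [reachCost_prepend_of_forall S H₁ ρ h1, reachCost_prepend_of_forall S H₁ ρ' h1,
        reachCost_prepend_of_forall S H₂ ρ h2, reachCost_prepend_of_forall S H₂ ρ' h2,
        ereal_nat_add_lt_add_iff, ereal_nat_add_lt_add_iff]
  · have h2 : ¬ ∀ u ∈ H₂, u ∉ S := fun h => h1 (hS.2 h)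
    push_neg at h1 h2
    rw [reachCost_prepend_of_exists S H₁ ρ' ρ h1, reachCost_prepend_of_exists S H₂ ρ' ρ h2]
    simp [lt_irrefl]

lemma Pset_zero (G : QGame P V) :
    G.Pset 0 = fun _h v => {ρ | G.IsPlay ρ ∧ ρ 0 = v} := by
  unfold Pset
  exact Ordinal.limitRecOn_zero _ _ _

lemma Pset_succ (G : QGame P V) (β : Ordinal) :
    G.Pset (Order.succ β) = fun h v => G.Pset β h v \ G.Eset (G.Pset β) h := by
  unfold Pset
  exact Ordinal.limitRecOn_succ _ _ _ _

lemma Pset_limit (G : QGame P V) {β : Ordinal} (hlim : Order.IsSuccLimit β) :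
    G.Pset β = fun h v => ⋂ (γ : Ordinal) (_ : γ < β), G.Pset γ h v := by
  unfold Pset
  exact Ordinal.limitRecOn_limit _ _ _ _ hlim

lemma Eset_congr' (G : QGame P V) (T : P → Set V) (hT : G.IsReachGame T)
    (Pr : List V → V → Set (ℕ → V)) (h₁ h₂ : List V)
    (hI : Iset T h₁ = Iset T h₂)
    (hPr : ∀ g v, Pr (h₁ ++ g) v = Pr (h₂ ++ g) v) :
    G.Eset Pr h₁ = G.Eset Pr h₂ := by
  have hIapp : ∀ g : List V, Iset T (h₁ ++ g) = Iset T (h₂ ++ g) := by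
    intro g
    rw [Iset_append', Iset_append', hI]
  ext ρ
  simp only [Eset, Set.mem_setOf_eq]
  refine exists_congr fun n => exists_congr fun v' => and_congr_right fun _ =>
    and_congr_right fun _ => ?_
  rw [hPr]
  refine forall_congr' fun ρ' => imp_congr_right fun _ => ?_
  have hT' : ∀ i ρ, G.cost i ρ = reachCost (T i) ρ := hT
  simp only [hT']
  rw [prepend_eq_prepend_append h₁ ρ (n + 1), prepend_eq_prepend_append h₂ ρ (n + 1)]
  apply reach_lt_iff
  have h := hIapp (playPrefix ρ (n + 1))
  simp only [Set.ext_iff, Iset, Set.mem_setOf_eq] at h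
  exact h (G.owner (ρ n))

end QGame

open QGame in
/-- In a quantitative reachability game, `P_α(hv)` depends
only on the last vertex `v` and on the set of players who have not yet
reached their targets along `h`: if `I(h₁) = I(h₂)` then
`P_α(h₁v) = P_α(h₂v)` for every ordinal `α`. -/
theorem reach_Pset_depends_only_on_Iset {P V : Type} [Finite P] [Finite V]
    (G : QGame P V) (T : P → Set V) (hT : G.IsReachGame T)
    (h₁ h₂ : List V) (v : V) (hI : Iset T h₁ = Iset T h₂) :
    ∀ α : Ordinal, G.Pset α h₁ v = G.Pset α h₂ v := by
  suffices H : ∀ α : Ordinal, ∀ h₁ h₂ : List V, Iset T h₁ = Iset T h₂ →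
      ∀ v : V, G.Pset α h₁ v = G.Pset α h₂ v by
    intro α; exact H α h₁ h₂ hI v
  intro α
  induction α using Ordinal.limitRecOn with
  | zero =>
    intro h₁ h₂ _ v
    rw [Pset_zero]
  | add_one β ih =>
    intro h₁ h₂ hI v
    have hP : ∀ g w, G.Pset β (h₁ ++ g) w = G.Pset β (h₂ ++ g) w := fun g w =>
      ih (h₁ ++ g) (h₂ ++ g) (by rw [Iset_append', Iset_append', hI]) w
    rw [← Order.succ_eq_add_one, Pset_succ]
    show G.Pset β h₁ v \ G.Eset (G.Pset β) h₁ = G.Pset β h₂ v \ G.Eset (G.Pset β) h₂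
    rw [ih h₁ h₂ hI v, Eset_congr' G T hT (G.Pset β) h₁ h₂ hI hP]
  | limit β hlim ih =>
    intro h₁ h₂ hI v
    rw [Pset_limit G hlim]
    exact Set.iInter_congr fun γ => Set.iInter_congr fun hγ => ih γ hγ h₁ h₂ hI v
end
end

section
/- For games with prefix-independent cost functions, the potential-outcome sets are history-independent: P_α(hv) = P_α(v) for all histories hv and ordinals α. -/
open Classical

noncomputable section

open QGame in
/-- For games with prefix-independent cost functions, the
potential-outcome sets are history-independent: `P_α(hv) = P_α(v)` for all
histories `hv` and ordinals `α`. -/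
theorem prefixIndep_Pset_hist_indep {P V : Type} [Finite P] [Finite V]
    (G : QGame P V)
    (hpi : ∀ (i : P) (h : List V) (ρ : ℕ → V),
      G.cost i (prepend h ρ) = G.cost i ρ) :
    ∀ (α : Ordinal) (h : List V) (v : V), G.Pset α h v = G.Pset α [] v := by
  intro α
  induction α using Ordinal.limitRecOn with
  | zero => intro h v; unfold Pset; rw [Ordinal.limitRecOn_zero]
  | add_one α ih =>
    intro h v
    have hs : ∀ h v, G.Pset (α + 1) h v =
        G.Pset α h v \ G.Eset (G.Pset α) h := by
      intro h v; unfold Pset; rw [Ordinal.limitRecOn_add_one]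
    rw [hs, hs, ih]
    have hE : G.Eset (G.Pset α) h = G.Eset (G.Pset α) [] := by
      ext ρ
      simp only [Eset, Set.mem_setOf_eq, hpi, List.nil_append, ih]
    rw [hE]
  | limit α hα ih =>
    intro h v
    have hl : ∀ h v, G.Pset α h v = ⋂ (β : Ordinal) (hβ : β < α), G.Pset β h v := by
      intro h v; unfold Pset; rw [Ordinal.limitRecOn_limit _ _ _ _ hα]
    rw [hl, hl]
    exact Set.iInter_congr fun β => Set.iInter_congr fun hβ => ih β hβ h v
end
end

section
/- For games with prefix-independent cost functions of finite range, the elimination procedure stabilizes in finitely many steps: there exists a natural number α* such that P_α*(v) = P_{α*+1}(v) for all vertices v. -/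
open Classical

noncomputable section

namespace QGame

variable {P V : Type}

/-- Elimination predicate depending only on the cost-value sets `t`. -/
def Psi (G : QGame P V) (t : V → P → Set EReal) : Set (ℕ → V) :=
  {ρ | ∃ n v', G.E (ρ n) v' ∧ v' ≠ ρ (n + 1) ∧
      ∀ x ∈ t v' (G.owner (ρ n)), x < G.cost (G.owner (ρ n)) ρ}

/-- History-free version of the elimination sequence at finite stages. -/
def Qf (G : QGame P V) : ℕ → V → Set (ℕ → V)
  | 0 => fun v => {ρ | G.IsPlay ρ ∧ ρ 0 = v}
  | n + 1 => fun v => Qf G n v \ G.Psi (fun v' i => G.cost i '' Qf G n v')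

/-- Cost-value sets along the elimination sequence. -/
def Tf (G : QGame P V) (n : ℕ) : V → P → Set EReal :=
  fun v i => G.cost i '' G.Qf n v

lemma Qf_succ (G : QGame P V) (n : ℕ) (v : V) :
    G.Qf (n + 1) v = G.Qf n v \ G.Psi (G.Tf n) := rfl

lemma Qf_subset_zero (G : QGame P V) (n : ℕ) (v : V) :
    G.Qf n v ⊆ G.Qf 0 v := by
  induction n with
  | zero => exact subset_rfl
  | succ n ih => exact (Set.diff_subset).trans ih

lemma Pset_eq_Qf (G : QGame P V)
    (hpi : ∀ (i : P) (h : List V) (ρ : ℕ → V),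
      G.cost i (prepend h ρ) = G.cost i ρ) :
    ∀ (n : ℕ) (h : List V) (v : V), G.Pset (n : Ordinal) h v = G.Qf n v := by
  intro n
  induction n with
  | zero =>
      intro h v
      simp only [Nat.cast_zero, Pset, Ordinal.limitRecOn_zero]
      rfl
  | succ n ih =>
      intro h v
      have hcast : ((n + 1 : ℕ) : Ordinal) = (n : Ordinal) + 1 := by
        exact_mod_cast Nat.cast_succ n
      rw [hcast]
      show Ordinal.limitRecOn (motive := fun _ => List V → V → Set (ℕ → V))
        ((n : Ordinal) + 1) _ _ _ h v = _
      rw [Ordinal.add_one_eq_succ, Ordinal.limitRecOn_succ]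
      have ihf : G.Pset (n : Ordinal) = fun _ v => G.Qf n v :=
        funext fun h => funext (ih h)
      have hE : G.Eset (G.Pset (n : Ordinal)) h = G.Psi (G.Tf n) := by
        ext ρ
        rw [ihf]
        simp only [Eset, Psi, Set.mem_setOf_eq, hpi, Tf,
          Set.forall_mem_image]
      show G.Pset (n : Ordinal) h v \ G.Eset (G.Pset (n : Ordinal)) h = _
      rw [hE, ih h v, Qf_succ]

end QGame

/-- An antitone sequence with finite range in a partial order stabilizes. -/
lemma antitone_finite_range_stabilizes {α : Type*} [PartialOrder α]
    (f : ℕ → α) (hf : Antitone f) (hfin : (Set.range f).Finite) :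
    ∃ n, ∀ m, n ≤ m → f m = f n := by
  obtain ⟨x, hx, hxmin⟩ := hfin.toFinset.exists_minimal
    (by simp [Set.range_nonempty])
  rw [Set.Finite.mem_toFinset] at hx
  obtain ⟨n, rfl⟩ := hx
  refine ⟨n, fun m hm => ?_⟩
  have hle : f m ≤ f n := hf hm
  have hnlt : ¬ f m < f n := fun hlt => hlt.not_ge (hxmin (by simp) hlt.le)
  exact hle.lt_or_eq.resolve_left hnlt

open QGame in
/-- For games on a finite graph with prefix-independent
cost functions of finite range `C_i ⊂ ℚ`, the elimination procedure
stabilizes in finitely many steps: there is `α* ∈ ℕ` with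
`P_{α*}(v) = P_{α*+1}(v)` for all vertices `v`. -/
theorem prefixIndep_finiteRange_finite_fixpoint {P V : Type}
    [Finite P] [Finite V] (G : QGame P V)
    (hpi : ∀ (i : P) (h : List V) (ρ : ℕ → V),
      G.cost i (prepend h ρ) = G.cost i ρ)
    (hrange : ∀ i : P, ∃ C : Finset ℚ, ∀ ρ : ℕ → V, G.IsPlay ρ →
      G.cost i ρ ∈ (fun q : ℚ => ((q : ℝ) : EReal)) '' C) :
    ∃ αstar : ℕ, ∀ v : V,
      G.Pset (αstar : Ordinal) [] v = G.Pset ((αstar : Ordinal) + 1) [] v := by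
  classical
  choose C hC using hrange
  -- The range of `Tf` is finite.
  have hTsub : ∀ (n : ℕ) (v : V) (i : P),
      G.Tf n v i ⊆ (fun q : ℚ => ((q : ℝ) : EReal)) '' (C i : Set ℚ) := by
    intro n v i x hx
    obtain ⟨ρ, hρ, rfl⟩ := hx
    have hplay : G.IsPlay ρ := (G.Qf_subset_zero n v hρ).1
    exact hC i ρ hplay
  have hfin : (Set.range (G.Tf)).Finite := by
    have hD : ∀ i : P,
        {s : Set EReal | s ⊆ (fun q : ℚ => ((q : ℝ) : EReal)) '' (C i : Set ℚ)}.Finite :=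
      fun i => Set.Finite.finite_subsets (((C i).finite_toSet).image _)
    have hbig : (Set.pi (Set.univ : Set V)
        (fun _ => Set.pi (Set.univ : Set P)
          (fun i => {s : Set EReal |
            s ⊆ (fun q : ℚ => ((q : ℝ) : EReal)) '' (C i : Set ℚ)}))).Finite :=
      Set.Finite.pi (fun _ => Set.Finite.pi (fun i => hD i))
    refine hbig.subset ?_
    rintro _ ⟨n, rfl⟩
    intro v _ i _
    exact hTsub n v i
  -- `Tf` is antitone.
  have hanti : Antitone (G.Tf) := by
    refine antitone_nat_of_succ_le fun n => ?_
    intro v i x hx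
    obtain ⟨ρ, hρ, rfl⟩ := hx
    exact ⟨ρ, hρ.1, rfl⟩
  obtain ⟨n, hn⟩ := antitone_finite_range_stabilizes (G.Tf) hanti hfin
  refine ⟨n + 1, fun v => ?_⟩
  have hcast : ((n + 1 : ℕ) : Ordinal) + 1 = ((n + 2 : ℕ) : Ordinal) := by
    push_cast
    rw [add_assoc, one_add_one_eq_two]
  rw [hcast, G.Pset_eq_Qf hpi (n + 1) [] v, G.Pset_eq_Qf hpi (n + 2) [] v]
  have h2 : G.Qf (n + 2) v = G.Qf (n + 1) v \ G.Psi (G.Tf (n + 1)) :=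
    G.Qf_succ (n + 1) v
  rw [h2, hn (n + 1) (by omega), G.Qf_succ n v, Set.diff_diff,
    Set.union_self]
end
end
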